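/- Let r > 4 and α = 3. There is a constant b₈ > 0 depending only on r such that for every L ≥ 1, every L-cube C ⊂ ℤ² (of side 2^{rL}), and every configuration σ : ℤ² → {-1,+1}, if m = min(|C⁺(σ)|, |C⁻(σ)|), then J(C⁺(σ), C⁻(σ)) = ∑_{x ∈ C⁺(σ)} ∑_{y ∈ C⁻(σ)} |x-y|^{-3} ≥ b₈ · √(m+1) · ln(m+1). -/

import Mathlib

open Finset

/-- Long-range interaction in `ℤ²`: `|x - y|^{-α}` with Euclidean distance. -/
noncomputable def Jint2 (α : ℝ) (p q : ℤ × ℤ) : ℝ :=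
  (Real.sqrt (((p.1 - q.1 : ℤ) : ℝ) ^ 2 + ((p.2 - q.2 : ℤ) : ℝ) ^ 2)) ^ (-α)

/-- The cube of side `s` in `ℤ²` with lower corner `s • x`. -/
noncomputable def cube2 (s : ℕ) (x : ℤ × ℤ) : Finset (ℤ × ℤ) :=
  Finset.Ico ((s : ℤ) * x.1) ((s : ℤ) * (x.1 + 1)) ×ˢ
    Finset.Ico ((s : ℤ) * x.2) ((s : ℤ) * (x.2 + 1))

/- ## Auxiliary arithmetic lemmas -/

lemma lt_div_succ_mul (a b : ℕ) (h : 0 < b) : a < (a/b + 1) * b := by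
  have h1 := Nat.div_add_mod a b; have h2 := Nat.mod_lt a h
  have h3 : (a/b+1)*b = b*(a/b) + b := by ring
  omega

lemma div_eq_of_bounds (n b a : ℕ) (h0 : 0 < n) (h1 : n*b ≤ a) (h2 : a < n*(b+1)) : a / n = b := by
  have h3 := Nat.div_add_mod a n; have h4 := Nat.mod_lt a h0
  have h5 : n*(b+1) = n*b+n := by ring
  rcases Nat.lt_trichotomy (a/n) b with h | h | h
  · have : n * (a/n) + n ≤ n * b := by
      have := Nat.mul_le_mul_left n (show a/n + 1 ≤ b by omega); linarith [this]
    omega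
  · exact h
  · have : n * b + n ≤ n * (a/n) := by
      have := Nat.mul_le_mul_left n (show b + 1 ≤ a/n by omega); linarith [this]
    omega

lemma natAbs_sq_cast (a : ℤ) : ((a.natAbs : ℝ))^2 = ((a:ℝ))^2 := by
  have h : ((a.natAbs:ℝ)) = |(a:ℝ)| := by rw [Nat.cast_natAbs]; exact Int.cast_abs
  rw [h, sq_abs]

/- ## Grid and edges -/

def adjE (a b : ℕ × ℕ) : Prop :=
  (a.1 = b.1 ∧ (a.2 = b.2 + 1 ∨ b.2 = a.2 + 1)) ∨
  (a.2 = b.2 ∧ (a.1 = b.1 + 1 ∨ b.1 = a.1 + 1))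

instance : ∀ a b : ℕ × ℕ, Decidable (adjE a b) := fun a b => by
  unfold adjE; infer_instance

def gridN (n : ℕ) : Finset (ℕ × ℕ) := Finset.range n ×ˢ Finset.range n

def edgesOf (n : ℕ) (S : Finset (ℕ × ℕ)) : Finset ((ℕ × ℕ) × (ℕ × ℕ)) :=
  ((gridN n) ×ˢ (gridN n)).filter (fun e => adjE e.1 e.2 ∧ e.1 ∈ S ∧ e.2 ∉ S)

lemma mem_edgesOf {n : ℕ} {S : Finset (ℕ × ℕ)} {e : (ℕ × ℕ) × (ℕ × ℕ)} :
    e ∈ edgesOf n S ↔ (e.1 ∈ gridN n ∧ e.2 ∈ gridN n ∧ adjE e.1 e.2 ∧ e.1 ∈ S ∧ e.2 ∉ S) := by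
  unfold edgesOf
  simp only [Finset.mem_filter, Finset.mem_product]
  tauto

lemma cross_up (P : ℕ → Prop) : ∀ c i, P i → ¬ P (i + c) →
    ∃ a, i ≤ a ∧ a + 1 ≤ i + c ∧ P a ∧ ¬ P (a + 1) := by
  intro c
  induction c with
  | zero => intro i h h2; exact absurd h (by simpa using h2)
  | succ c ih =>
    intro i h h2
    by_cases h1 : P (i + 1)
    · obtain ⟨a, ha1, ha2, ha3, ha4⟩ := ih (i + 1) h1 (by rw [show i+1+c = i+(c+1) by omega]; exact h2)
      exact ⟨a, by omega, by omega, ha3, ha4⟩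
    · exact ⟨i, le_refl _, by omega, h, h1⟩

/-- In a row with both a point of S and a point not in S, there is an edge. -/
lemma row_edge (n : ℕ) (S : Finset (ℕ × ℕ)) (j : ℕ) (hj : j ∈ Finset.range n)
    (h1 : ∃ i ∈ Finset.range n, (i, j) ∈ S) (h2 : ∃ i ∈ Finset.range n, (i, j) ∉ S) :
    ∃ e ∈ edgesOf n S, e.1.2 = j ∧ e.2.2 = j := by
  classical
  obtain ⟨i1, hi1, hm1⟩ := h1
  obtain ⟨i2, hi2, hm2⟩ := h2
  simp only [Finset.mem_range] at hi1 hi2 hj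
  rcases Nat.lt_trichotomy i1 i2 with h | h | h
  · obtain ⟨a, ha1, ha2, ha3, ha4⟩ := cross_up (fun i => (i, j) ∈ S) (i2 - i1) i1 hm1
      (by rw [show i1 + (i2 - i1) = i2 by omega]; exact hm2)
    refine ⟨((a, j), (a + 1, j)), ?_, rfl, rfl⟩
    simp only [edgesOf, Finset.mem_filter, Finset.mem_product, gridN, Finset.mem_range]
    exact ⟨⟨⟨by omega, hj⟩, ⟨by omega, hj⟩⟩, Or.inr ⟨rfl, Or.inr rfl⟩, ha3, ha4⟩
  · exact absurd hm1 (h ▸ hm2)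
  · obtain ⟨a, ha1, ha2, ha3, ha4⟩ := cross_up (fun i => (i, j) ∉ S) (i1 - i2) i2 hm2
      (by rw [show i2 + (i1 - i2) = i1 by omega]; simpa using hm1)
    refine ⟨((a + 1, j), (a, j)), ?_, rfl, rfl⟩
    simp only [edgesOf, Finset.mem_filter, Finset.mem_product, gridN, Finset.mem_range]
    exact ⟨⟨⟨by omega, hj⟩, ⟨by omega, hj⟩⟩, Or.inr ⟨rfl, Or.inl rfl⟩, not_not.mp ha4, ha3⟩

lemma col_edge (n : ℕ) (S : Finset (ℕ × ℕ)) (i : ℕ) (hi : i ∈ Finset.range n)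
    (h1 : ∃ j ∈ Finset.range n, (i, j) ∈ S) (h2 : ∃ j ∈ Finset.range n, (i, j) ∉ S) :
    ∃ e ∈ edgesOf n S, e.1.1 = i ∧ e.2.1 = i := by
  classical
  obtain ⟨j1, hj1, hm1⟩ := h1
  obtain ⟨j2, hj2, hm2⟩ := h2
  simp only [Finset.mem_range] at hj1 hj2 hi
  rcases Nat.lt_trichotomy j1 j2 with h | h | h
  · obtain ⟨a, ha1, ha2, ha3, ha4⟩ := cross_up (fun j => (i, j) ∈ S) (j2 - j1) j1 hm1
      (by rw [show j1 + (j2 - j1) = j2 by omega]; exact hm2)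
    refine ⟨((i, a), (i, a + 1)), ?_, rfl, rfl⟩
    simp only [edgesOf, Finset.mem_filter, Finset.mem_product, gridN, Finset.mem_range]
    exact ⟨⟨⟨hi, by omega⟩, ⟨hi, by omega⟩⟩, Or.inl ⟨rfl, Or.inr rfl⟩, ha3, ha4⟩
  · exact absurd hm1 (h ▸ hm2)
  · obtain ⟨a, ha1, ha2, ha3, ha4⟩ := cross_up (fun j => (i, j) ∉ S) (j1 - j2) j2 hm2
      (by rw [show j2 + (j1 - j2) = j1 by omega]; simpa using hm1)
    refine ⟨((i, a + 1), (i, a)), ?_, rfl, rfl⟩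
    simp only [edgesOf, Finset.mem_filter, Finset.mem_product, gridN, Finset.mem_range]
    exact ⟨⟨⟨hi, by omega⟩, ⟨hi, by omega⟩⟩, Or.inl ⟨rfl, Or.inl rfl⟩, not_not.mp ha4, ha3⟩

lemma mixed_rows_le (n : ℕ) (S : Finset (ℕ × ℕ)) :
    (((Finset.range n)).filter (fun j =>
      (∃ i ∈ Finset.range n, (i, j) ∈ S) ∧ (∃ i ∈ Finset.range n, (i, j) ∉ S))).card
    ≤ (edgesOf n S).card := by
  classical
  set MR := ((Finset.range n)).filter (fun j =>
      (∃ i ∈ Finset.range n, (i, j) ∈ S) ∧ (∃ i ∈ Finset.range n, (i, j) ∉ S)) with hMR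
  set HE := (edgesOf n S).filter (fun e => e.1.2 = e.2.2) with hHE
  have hfib : HE.card = ∑ j ∈ Finset.range n, (HE.filter (fun e => e.1.2 = j)).card := by
    apply Finset.card_eq_sum_card_fiberwise
    intro e he
    simp only [Finset.mem_coe, hHE, edgesOf, Finset.mem_filter, Finset.mem_product, gridN, Finset.mem_range] at he
    exact Finset.mem_range.mpr he.1.1.1.2
  have hone : ∀ j ∈ MR, 1 ≤ (HE.filter (fun e => e.1.2 = j)).card := by
    intro j hj
    simp only [hMR, Finset.mem_filter] at hj
    obtain ⟨e, he, h1, h2⟩ := row_edge n S j hj.1 hj.2.1 hj.2.2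
    have : e ∈ HE.filter (fun e => e.1.2 = j) := by
      simp only [hHE, Finset.mem_filter]
      exact ⟨⟨he, by rw [h1, h2]⟩, h1⟩
    exact Finset.card_pos.mpr ⟨e, this⟩
  calc MR.card = ∑ j ∈ MR, 1 := by simp
    _ ≤ ∑ j ∈ MR, (HE.filter (fun e => e.1.2 = j)).card := Finset.sum_le_sum hone
    _ ≤ ∑ j ∈ Finset.range n, (HE.filter (fun e => e.1.2 = j)).card :=
        Finset.sum_le_sum_of_subset (Finset.filter_subset _ _)
    _ = HE.card := hfib.symm
    _ ≤ (edgesOf n S).card := Finset.card_le_card (Finset.filter_subset _ _)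

lemma mixed_cols_le (n : ℕ) (S : Finset (ℕ × ℕ)) :
    (((Finset.range n)).filter (fun i =>
      (∃ j ∈ Finset.range n, (i, j) ∈ S) ∧ (∃ j ∈ Finset.range n, (i, j) ∉ S))).card
    ≤ (edgesOf n S).card := by
  classical
  set MR := ((Finset.range n)).filter (fun i =>
      (∃ j ∈ Finset.range n, (i, j) ∈ S) ∧ (∃ j ∈ Finset.range n, (i, j) ∉ S)) with hMR
  set HE := (edgesOf n S).filter (fun e => e.1.1 = e.2.1) with hHE
  have hfib : HE.card = ∑ i ∈ Finset.range n, (HE.filter (fun e => e.1.1 = i)).card := by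
    apply Finset.card_eq_sum_card_fiberwise
    intro e he
    simp only [Finset.mem_coe, hHE, edgesOf, Finset.mem_filter, Finset.mem_product, gridN, Finset.mem_range] at he
    exact Finset.mem_range.mpr he.1.1.1.1
  have hone : ∀ i ∈ MR, 1 ≤ (HE.filter (fun e => e.1.1 = i)).card := by
    intro i hi
    simp only [hMR, Finset.mem_filter] at hi
    obtain ⟨e, he, h1, h2⟩ := col_edge n S i hi.1 hi.2.1 hi.2.2
    have : e ∈ HE.filter (fun e => e.1.1 = i) := by
      simp only [hHE, Finset.mem_filter]
      exact ⟨⟨he, by rw [h1, h2]⟩, h1⟩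
    exact Finset.card_pos.mpr ⟨e, this⟩
  calc MR.card = ∑ i ∈ MR, 1 := by simp
    _ ≤ ∑ i ∈ MR, (HE.filter (fun e => e.1.1 = i)).card := Finset.sum_le_sum hone
    _ ≤ ∑ i ∈ Finset.range n, (HE.filter (fun e => e.1.1 = i)).card :=
        Finset.sum_le_sum_of_subset (Finset.filter_subset _ _)
    _ = HE.card := hfib.symm
    _ ≤ (edgesOf n S).card := Finset.card_le_card (Finset.filter_subset _ _)

lemma grid_iso (n : ℕ) (S : Finset (ℕ × ℕ)) (hS : S ⊆ gridN n) :
    min S.card (n ^ 2 - S.card) ≤ ((edgesOf n S).card) ^ 2 := by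
  classical
  set E := (edgesOf n S).card with hEdef
  set MR := ((Finset.range n)).filter (fun j =>
      (∃ i ∈ Finset.range n, (i, j) ∈ S) ∧ (∃ i ∈ Finset.range n, (i, j) ∉ S)) with hMR
  set MC := ((Finset.range n)).filter (fun i =>
      (∃ j ∈ Finset.range n, (i, j) ∈ S) ∧ (∃ j ∈ Finset.range n, (i, j) ∉ S)) with hMC
  have hMRle : MR.card ≤ E := mixed_rows_le n S
  have hMCle : MC.card ≤ E := mixed_cols_le n S
  by_cases hfr : ∃ j ∈ Finset.range n, ∀ i ∈ Finset.range n, (i, j) ∈ S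
  · -- S has a full row
    by_cases her : ∃ j ∈ Finset.range n, ∀ i ∈ Finset.range n, (i, j) ∉ S
    · -- also an empty row: all columns mixed
      obtain ⟨j1, hj1, hfull⟩ := hfr
      obtain ⟨j2, hj2, hemp⟩ := her
      have hsub : Finset.range n ⊆ MC := by
        intro i hi
        simp only [hMC, Finset.mem_filter]
        exact ⟨hi, ⟨j1, hj1, hfull i hi⟩, ⟨j2, hj2, hemp i hi⟩⟩
      have hn : n ≤ E := le_trans (by simpa using Finset.card_le_card hsub) hMCle
      calc min S.card (n^2 - S.card) ≤ n^2 - S.card := min_le_right _ _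
        _ ≤ n^2 := Nat.sub_le _ _
        _ ≤ E^2 := Nat.pow_le_pow_left hn 2
    · by_cases hec : ∃ i ∈ Finset.range n, ∀ j ∈ Finset.range n, (i, j) ∉ S
      · -- full row + empty column: contradiction
        obtain ⟨j1, hj1, hfull⟩ := hfr
        obtain ⟨i1, hi1, hemp⟩ := hec
        exact absurd (hfull i1 hi1) (hemp j1 hj1)
      · -- no empty row, no empty column: T-side bound
        push_neg at her hec
        -- every row meets S and every column meets S, so every T-row and T-col is mixed
        set T := gridN n \ S with hT
        have hTsub : T ⊆ (MC ×ˢ MR) := by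
          intro p hp
          simp only [hT, Finset.mem_sdiff, gridN, Finset.mem_product, Finset.mem_range] at hp
          obtain ⟨⟨hp1, hp2⟩, hp3⟩ := hp
          simp only [Finset.mem_product, hMC, hMR, Finset.mem_filter]
          refine ⟨⟨Finset.mem_range.mpr hp1, ?_, ⟨p.2, Finset.mem_range.mpr hp2, ?_⟩⟩, ⟨Finset.mem_range.mpr hp2, ?_, ⟨p.1, Finset.mem_range.mpr hp1, ?_⟩⟩⟩
          · obtain ⟨j, hj, hjS⟩ := hec p.1 (Finset.mem_range.mpr hp1)
            exact ⟨j, hj, hjS⟩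
          · simpa using hp3
          · obtain ⟨i, hi, hiS⟩ := her p.2 (Finset.mem_range.mpr hp2)
            exact ⟨i, hi, hiS⟩
          · simpa using hp3
        have hTcard : T.card = n^2 - S.card := by
          rw [hT, Finset.card_sdiff_of_subset hS]
          congr 1
          simp [gridN, Finset.card_product, pow_two]
        calc min S.card (n^2 - S.card) ≤ n^2 - S.card := min_le_right _ _
          _ = T.card := hTcard.symm
          _ ≤ (MC ×ˢ MR).card := Finset.card_le_card hTsub
          _ = MC.card * MR.card := Finset.card_product _ _
          _ ≤ E * E := Nat.mul_le_mul hMCle hMRle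
          _ = E^2 := (pow_two E).symm
  · by_cases hfc : ∃ i ∈ Finset.range n, ∀ j ∈ Finset.range n, (i, j) ∈ S
    · -- full column
      by_cases hec : ∃ i ∈ Finset.range n, ∀ j ∈ Finset.range n, (i, j) ∉ S
      · -- full col + empty col: all rows mixed
        obtain ⟨i1, hi1, hfull⟩ := hfc
        obtain ⟨i2, hi2, hemp⟩ := hec
        have hsub : Finset.range n ⊆ MR := by
          intro j hj
          simp only [hMR, Finset.mem_filter]
          exact ⟨hj, ⟨i1, hi1, hfull j hj⟩, ⟨i2, hi2, hemp j hj⟩⟩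
        have hn : n ≤ E := le_trans (by simpa using Finset.card_le_card hsub) hMRle
        calc min S.card (n^2 - S.card) ≤ n^2 - S.card := min_le_right _ _
          _ ≤ n^2 := Nat.sub_le _ _
          _ ≤ E^2 := Nat.pow_le_pow_left hn 2
      · by_cases her : ∃ j ∈ Finset.range n, ∀ i ∈ Finset.range n, (i, j) ∉ S
        · -- full column + empty row: contradiction
          obtain ⟨i1, hi1, hfull⟩ := hfc
          obtain ⟨j1, hj1, hemp⟩ := her
          exact absurd (hfull j1 hj1) (hemp i1 hi1)
        · -- no empty row/col: T-side again
          push_neg at her hec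
          set T := gridN n \ S with hT
          have hTsub : T ⊆ (MC ×ˢ MR) := by
            intro p hp
            simp only [hT, Finset.mem_sdiff, gridN, Finset.mem_product, Finset.mem_range] at hp
            obtain ⟨⟨hp1, hp2⟩, hp3⟩ := hp
            simp only [Finset.mem_product, hMC, hMR, Finset.mem_filter]
            refine ⟨⟨Finset.mem_range.mpr hp1, ?_, ⟨p.2, Finset.mem_range.mpr hp2, ?_⟩⟩, ⟨Finset.mem_range.mpr hp2, ?_, ⟨p.1, Finset.mem_range.mpr hp1, ?_⟩⟩⟩
            · obtain ⟨j, hj, hjS⟩ := hec p.1 (Finset.mem_range.mpr hp1)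
              exact ⟨j, hj, hjS⟩
            · simpa using hp3
            · obtain ⟨i, hi, hiS⟩ := her p.2 (Finset.mem_range.mpr hp2)
              exact ⟨i, hi, hiS⟩
            · simpa using hp3
          have hTcard : T.card = n^2 - S.card := by
            rw [hT, Finset.card_sdiff_of_subset hS]
            congr 1
            simp [gridN, Finset.card_product, pow_two]
          calc min S.card (n^2 - S.card) ≤ n^2 - S.card := min_le_right _ _
            _ = T.card := hTcard.symm
            _ ≤ (MC ×ˢ MR).card := Finset.card_le_card hTsub
            _ = MC.card * MR.card := Finset.card_product _ _
            _ ≤ E * E := Nat.mul_le_mul hMCle hMRle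
            _ = E^2 := (pow_two E).symm
    · -- no full row and no full column: S-side
      push_neg at hfr hfc
      have hSsub : S ⊆ (MC ×ˢ MR) := by
        intro p hp
        have hpg := hS hp
        simp only [gridN, Finset.mem_product, Finset.mem_range] at hpg
        obtain ⟨hp1, hp2⟩ := hpg
        simp only [Finset.mem_product, hMC, hMR, Finset.mem_filter]
        refine ⟨⟨Finset.mem_range.mpr hp1, ⟨p.2, Finset.mem_range.mpr hp2, by simpa using hp⟩, ?_⟩,
                ⟨Finset.mem_range.mpr hp2, ⟨p.1, Finset.mem_range.mpr hp1, by simpa using hp⟩, ?_⟩⟩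
        · obtain ⟨j, hj, hjS⟩ := hfc p.1 (Finset.mem_range.mpr hp1)
          exact ⟨j, hj, hjS⟩
        · obtain ⟨i, hi, hiS⟩ := hfr p.2 (Finset.mem_range.mpr hp2)
          exact ⟨i, hi, hiS⟩
      calc min S.card (n^2 - S.card) ≤ S.card := min_le_left _ _
        _ ≤ (MC ×ˢ MR).card := Finset.card_le_card hSsub
        _ = MC.card * MR.card := Finset.card_product _ _
        _ ≤ E * E := Nat.mul_le_mul hMCle hMRle
        _ = E^2 := (pow_two E).symm

lemma mem_cube2 (s : ℕ) (x p : ℤ × ℤ) :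
    p ∈ cube2 s x ↔ ((s:ℤ)*x.1 ≤ p.1 ∧ p.1 < (s:ℤ)*x.1 + s ∧
      (s:ℤ)*x.2 ≤ p.2 ∧ p.2 < (s:ℤ)*x.2 + s) := by
  simp only [cube2, Finset.mem_product, Finset.mem_Ico, mul_add, mul_one]
  tauto

lemma card_cube2 (s : ℕ) (x : ℤ × ℤ) : (cube2 s x).card = s^2 := by
  simp only [cube2, Finset.card_product, Int.card_Ico]
  have h1 : (s:ℤ)*(x.1+1) - (s:ℤ)*x.1 = s := by ring
  have h2 : (s:ℤ)*(x.2+1) - (s:ℤ)*x.2 = s := by ring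
  rw [h1, h2]
  simp [pow_two]

lemma scale_claim (s k : ℕ) (x : ℤ×ℤ) (A B : Finset (ℤ×ℤ))
    (n : ℕ) (hn : n * 2^k = s)
    (hunion : A ∪ B = cube2 s x) (hdisj : Disjoint A B)
    (hAB : 2 * A.card ≤ s^2)
    (hk : 64^k ≤ A.card) :
    64^k * A.card ≤ 256 * (((A ×ˢ B).filter
      (fun pq => ((pq.1.1 - pq.2.1).natAbs)^2 + ((pq.1.2 - pq.2.2).natAbs)^2 ≤ 4^(k+2))).card)^2 := by
  classical
  set m := A.card with hm
  set ρ := 2^k with hρdef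
  have hρ : 0 < ρ := Nat.pow_pos (by norm_num)
  have hρ4 : ρ^2 = 4^k := by
    rw [hρdef, ← pow_mul, mul_comm k 2, pow_mul]; norm_num
  have h64 : (4^k)*(4^k)*(4^k) = 64^k := by
    rw [← mul_pow, ← mul_pow]; norm_num
  -- the coordinate map
  set φ : ℤ×ℤ → ℕ×ℕ := fun p => ((p.1 - (s:ℤ)*x.1).toNat / ρ, ((p.2 - (s:ℤ)*x.2).toNat / ρ)) with hφ
  have hAsub : A ⊆ cube2 s x := by
    rw [← hunion]; exact Finset.subset_union_left
  have hBsub : B ⊆ cube2 s x := by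
    rw [← hunion]; exact Finset.subset_union_right
  -- membership of φ in the grid
  have hφmem : ∀ p ∈ cube2 s x, φ p ∈ gridN n := by
    intro p hp
    rw [mem_cube2] at hp
    simp only [hφ, gridN, Finset.mem_product, Finset.mem_range]
    constructor
    · rw [Nat.div_lt_iff_lt_mul hρ]
      have : (p.1 - (s:ℤ)*x.1).toNat < s := by omega
      omega
    · rw [Nat.div_lt_iff_lt_mul hρ]
      have : (p.2 - (s:ℤ)*x.2).toNat < s := by omega
      omega
  -- fiber bounds
  have hcoord : ∀ (t : ℕ) (i : ℕ), t / ρ = i ↔ (ρ*i ≤ t ∧ t < ρ*i + ρ) := by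
    intro t i
    constructor
    · intro h
      subst h
      refine ⟨Nat.mul_div_le t ρ, ?_⟩
      have := lt_div_succ_mul t ρ hρ
      have h2 : (t/ρ + 1) * ρ = ρ*(t/ρ) + ρ := by ring
      omega
    · intro ⟨h1, h2⟩
      exact div_eq_of_bounds ρ i t hρ h1 (by rw [Nat.mul_add, Nat.mul_one]; omega)
  -- fiber description
  have hfib : ∀ g ∈ gridN n, (cube2 s x).filter (fun p => φ p = g) =
      (Finset.Ico ((s:ℤ)*x.1 + ((ρ*g.1 : ℕ):ℤ)) ((s:ℤ)*x.1 + ((ρ*g.1 : ℕ):ℤ) + ρ)) ×ˢ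
      (Finset.Ico ((s:ℤ)*x.2 + ((ρ*g.2 : ℕ):ℤ)) ((s:ℤ)*x.2 + ((ρ*g.2 : ℕ):ℤ) + ρ)) := by
    intro g hg
    obtain ⟨g1, g2⟩ := g
    simp only [gridN, Finset.mem_product, Finset.mem_range] at hg
    have hg1 : ρ*g1 + ρ ≤ s := by
      have h1 : ρ*(g1+1) ≤ ρ*n := Nat.mul_le_mul_left ρ hg.1
      have h2 : ρ*n = s := by rw [mul_comm] at hn; exact hn
      have h3 : ρ*(g1+1) = ρ*g1 + ρ := by ring
      omega
    have hg2 : ρ*g2 + ρ ≤ s := by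
      have h1 : ρ*(g2+1) ≤ ρ*n := Nat.mul_le_mul_left ρ hg.2
      have h2 : ρ*n = s := by rw [mul_comm] at hn; exact hn
      have h3 : ρ*(g2+1) = ρ*g2 + ρ := by ring
      omega
    ext p
    simp only [Finset.mem_filter, mem_cube2, Finset.mem_product, Finset.mem_Ico, hφ,
      Prod.mk.injEq]
    constructor
    · rintro ⟨⟨hc1, hc2, hc3, hc4⟩, hd1, hd2⟩
      rw [hcoord] at hd1 hd2
      omega
    · rintro ⟨⟨he1, he2⟩, he3, he4⟩
      have hb1 : ρ*g1 ≤ (p.1 - (s:ℤ)*x.1).toNat ∧ (p.1 - (s:ℤ)*x.1).toNat < ρ*g1 + ρ := by omega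
      have hb2 : ρ*g2 ≤ (p.2 - (s:ℤ)*x.2).toNat ∧ (p.2 - (s:ℤ)*x.2).toNat < ρ*g2 + ρ := by omega
      refine ⟨⟨by omega, by omega, by omega, by omega⟩, ?_, ?_⟩
      · rw [hcoord]; exact hb1
      · rw [hcoord]; exact hb2
  have hfibcard : ∀ g ∈ gridN n, ((cube2 s x).filter (fun p => φ p = g)).card = 4^k := by
    intro g hg
    rw [hfib g hg, Finset.card_product, Int.card_Ico, Int.card_Ico, ← hρ4]
    have h1 : ((s:ℤ)*x.1 + ((ρ*g.1 : ℕ):ℤ) + ρ) - ((s:ℤ)*x.1 + ((ρ*g.1 : ℕ):ℤ)) = (ρ:ℤ) := by ring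
    have h2 : ((s:ℤ)*x.2 + ((ρ*g.2 : ℕ):ℤ) + ρ) - ((s:ℤ)*x.2 + ((ρ*g.2 : ℕ):ℤ)) = (ρ:ℤ) := by ring
    rw [h1, h2]
    simp [pow_two]
  -- A- and B- fiber counts
  set a : ℕ×ℕ → ℕ := fun g => (A.filter (fun p => φ p = g)).card with ha
  set b : ℕ×ℕ → ℕ := fun g => (B.filter (fun p => φ p = g)).card with hb
  have hab : ∀ g ∈ gridN n, a g + b g = 4^k := by
    intro g hg
    have hdisj2 : Disjoint (A.filter (fun p => φ p = g)) (B.filter (fun p => φ p = g)) :=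
      Finset.disjoint_filter_filter hdisj
    have hu : (A.filter (fun p => φ p = g)) ∪ (B.filter (fun p => φ p = g)) =
        (cube2 s x).filter (fun p => φ p = g) := by
      rw [← Finset.filter_union, hunion]
    have := Finset.card_union_of_disjoint hdisj2
    rw [hu] at this
    rw [hfibcard g hg] at this
    simp only [ha, hb]
    omega
  have hasum : ∑ g ∈ gridN n, a g = m := by
    rw [hm, ha]
    exact (Finset.card_eq_sum_card_fiberwise (fun p hp => hφmem p (hAsub hp))).symm
  have hale : ∀ g ∈ gridN n, a g ≤ 4^k := by
    intro g hg; have := hab g hg; omega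
  -- distance bound for nearly-equal boxes
  have hdist : ∀ p ∈ cube2 s x, ∀ q ∈ cube2 s x,
      (φ p).1 ≤ (φ q).1 + 1 → (φ q).1 ≤ (φ p).1 + 1 →
      (φ p).2 ≤ (φ q).2 + 1 → (φ q).2 ≤ (φ p).2 + 1 →
      ((p.1 - q.1).natAbs)^2 + ((p.2 - q.2).natAbs)^2 ≤ 4^(k+2) := by
    intro p hp q hq h1 h2 h3 h4
    have hpf := hfib (φ p) (hφmem p hp)
    have hqf := hfib (φ q) (hφmem q hq)
    have hpm : p ∈ (cube2 s x).filter (fun z => φ z = φ p) := Finset.mem_filter.mpr ⟨hp, rfl⟩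
    have hqm : q ∈ (cube2 s x).filter (fun z => φ z = φ q) := Finset.mem_filter.mpr ⟨hq, rfl⟩
    rw [hpf] at hpm
    rw [hqf] at hqm
    simp only [Finset.mem_product, Finset.mem_Ico] at hpm hqm
    simp only [hφ] at h1 h2 h3 h4 hpm hqm
    set u1 := (p.1 - (s:ℤ)*x.1).toNat / ρ with hu1
    set u2 := (p.2 - (s:ℤ)*x.2).toNat / ρ with hu2
    set v1 := (q.1 - (s:ℤ)*x.1).toNat / ρ with hv1
    set v2 := (q.2 - (s:ℤ)*x.2).toNat / ρ with hv2
    have e1 : ρ * u1 ≤ ρ * (v1 + 1) := Nat.mul_le_mul_left ρ h1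
    have e2 : ρ * v1 ≤ ρ * (u1 + 1) := Nat.mul_le_mul_left ρ h2
    have e3 : ρ * u2 ≤ ρ * (v2 + 1) := Nat.mul_le_mul_left ρ h3
    have e4 : ρ * v2 ≤ ρ * (u2 + 1) := Nat.mul_le_mul_left ρ h4
    have f1 : ρ * (v1 + 1) = ρ * v1 + ρ := by ring
    have f2 : ρ * (u1 + 1) = ρ * u1 + ρ := by ring
    have f3 : ρ * (v2 + 1) = ρ * v2 + ρ := by ring
    have f4 : ρ * (u2 + 1) = ρ * u2 + ρ := by ring
    have g1 : (p.1 - q.1).natAbs ≤ 2*ρ - 1 := by omega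
    have g2 : (p.2 - q.2).natAbs ≤ 2*ρ - 1 := by omega
    have g3 : ((p.1 - q.1).natAbs)^2 ≤ (2*ρ-1)^2 := Nat.pow_le_pow_left g1 2
    have g4 : ((p.2 - q.2).natAbs)^2 ≤ (2*ρ-1)^2 := Nat.pow_le_pow_left g2 2
    have g5 : (2*ρ-1)^2 ≤ (2*ρ)^2 := Nat.pow_le_pow_left (by omega) 2
    have g6 : (2*ρ)^2 = 4*ρ^2 := by ring
    have g7 : (4:ℕ)^(k+2) = 16*4^k := by rw [pow_add]; ring
    omega
  -- local pair sets
  set lp : (ℕ×ℕ) × (ℕ×ℕ) → Finset ((ℤ×ℤ)×(ℤ×ℤ)) := fun e =>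
    (A.filter (fun p => φ p = e.1)) ×ˢ (B.filter (fun p => φ p = e.2)) with hlp
  set bigP : Finset ((ℤ×ℤ)×(ℤ×ℤ)) := (A ×ˢ B).filter
      (fun pq => ((pq.1.1 - pq.2.1).natAbs)^2 + ((pq.1.2 - pq.2.2).natAbs)^2 ≤ 4^(k+2)) with hbigP
  have hlpcard : ∀ e, (lp e).card = a e.1 * b e.2 := by
    intro e; rw [hlp]; exact Finset.card_product _ _
  have hlpdisj : ∀ e e' : (ℕ×ℕ) × (ℕ×ℕ), e ≠ e' → Disjoint (lp e) (lp e') := by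
    intro e e' hne
    rw [Finset.disjoint_left]
    intro pq hpq hpq'
    simp only [hlp, Finset.mem_product, Finset.mem_filter] at hpq hpq'
    apply hne
    have : e.1 = e'.1 := by rw [← hpq.1.2, hpq'.1.2]
    have : e.2 = e'.2 := by rw [← hpq.2.2, hpq'.2.2]
    exact Prod.ext (by rw [← hpq.1.2, hpq'.1.2]) (by rw [← hpq.2.2, hpq'.2.2])
  have hlpsub : ∀ e : (ℕ×ℕ) × (ℕ×ℕ),
      (e.1.1 ≤ e.2.1 + 1) → (e.2.1 ≤ e.1.1 + 1) → (e.1.2 ≤ e.2.2 + 1) → (e.2.2 ≤ e.1.2 + 1) →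
      lp e ⊆ bigP := by
    intro e j1 j2 j3 j4
    intro pq hpq
    simp only [hlp, Finset.mem_product, Finset.mem_filter] at hpq
    simp only [hbigP, Finset.mem_filter, Finset.mem_product]
    refine ⟨⟨hpq.1.1, hpq.2.1⟩, ?_⟩
    have := hdist pq.1 (hAsub hpq.1.1) pq.2 (hBsub hpq.2.1)
    rw [hpq.1.2, hpq.2.2] at this
    exact this j1 j2 j3 j4
  -- grid card
  have hgrid : (gridN n).card = n^2 := by
    simp [gridN, Finset.card_product, pow_two]
  have hs2 : s^2 = n^2*4^k := by
    rw [← hn, mul_pow, hρ4]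
  set Hs := (gridN n).filter (fun g => 3*4^k < 4 * a g) with hHs
  have hHsub : Hs ⊆ gridN n := Finset.filter_subset _ _
  have hHn : Hs.card ≤ n^2 := by rw [← hgrid]; exact Finset.card_le_card hHsub
  by_cases hcase : m ≤ 2*4^k*Hs.card
  · -- many high boxes: use isoperimetry
    have hHm : 3*4^k*Hs.card ≤ 4*m := by
      calc 3*4^k*Hs.card = ∑ _g ∈ Hs, 3*4^k := by rw [Finset.sum_const, smul_eq_mul, mul_comm]
        _ ≤ ∑ g ∈ Hs, 4 * a g := Finset.sum_le_sum (fun g hg => le_of_lt (Finset.mem_filter.mp hg).2)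
        _ = 4 * ∑ g ∈ Hs, a g := by rw [Finset.mul_sum]
        _ ≤ 4 * ∑ g ∈ gridN n, a g := by
            apply Nat.mul_le_mul_left
            exact Finset.sum_le_sum_of_subset hHsub
        _ = 4*m := by rw [hasum]
    have hmin : m ≤ 2*4^k * min Hs.card (n^2 - Hs.card) := by
      rcases le_or_gt Hs.card (n^2 - Hs.card) with h|h
      · rw [min_eq_left h]; exact hcase
      · rw [min_eq_right (le_of_lt h)]
        have q1 : 4*m ≤ 2*(n^2*4^k) := by rw [← hs2]; omega
        have q2 : 3*Hs.card ≤ 2*n^2 := by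
          have q1' : 3*4^k*Hs.card ≤ 2*(n^2*4^k) := le_trans hHm q1
          have e1 : 3*4^k*Hs.card = (3*Hs.card)*4^k := by ring
          have e2 : 2*(n^2*4^k) = (2*n^2)*4^k := by ring
          rw [e1, e2] at q1'
          exact Nat.le_of_mul_le_mul_right q1' (Nat.pow_pos (by norm_num))
        have q3 : n^2 ≤ 3*(n^2 - Hs.card) := by omega
        have q6 : 3*m ≤ 3*(2*4^k*(n^2 - Hs.card)) := by
          calc 3*m ≤ 4*m := by omega
            _ ≤ 2*(n^2*4^k) := q1
            _ = 2*4^k*n^2 := by ring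
            _ ≤ 2*4^k*(3*(n^2-Hs.card)) := Nat.mul_le_mul_left _ q3
            _ = 3*(2*4^k*(n^2 - Hs.card)) := by ring
        exact Nat.le_of_mul_le_mul_left q6 (by norm_num)
    have hiso := grid_iso n Hs hHsub
    set Ec := (edgesOf n Hs).card with hEc
    have hedge : ∀ e ∈ edgesOf n Hs, lp e ⊆ bigP ∧ 3*(4^k*4^k) ≤ 16 * (a e.1 * b e.2) := by
      intro e he
      rw [mem_edgesOf] at he
      obtain ⟨hg1, hg2, hadj, hin, hout⟩ := he
      have hah : 3*4^k < 4 * a e.1 := (Finset.mem_filter.mp hin).2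
      have hal : 4 * a e.2 ≤ 3*4^k := by
        by_contra hcon
        exact hout (Finset.mem_filter.mpr ⟨hg2, by omega⟩)
      have habe : a e.2 + b e.2 = 4^k := hab e.2 hg2
      have hbl : 4^k ≤ 4 * b e.2 := by omega
      have hadj4 : e.1.1 ≤ e.2.1 + 1 ∧ e.2.1 ≤ e.1.1 + 1 ∧ e.1.2 ≤ e.2.2 + 1 ∧ e.2.2 ≤ e.1.2 + 1 := by
        rcases hadj with ⟨h1, h2⟩ | ⟨h1, h2⟩ <;> omega
      constructor
      · exact hlpsub e hadj4.1 hadj4.2.1 hadj4.2.2.1 hadj4.2.2.2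
      · have m1 : (3*4^k+1) * 4^k ≤ (4 * a e.1) * (4 * b e.2) :=
          Nat.mul_le_mul (by omega) hbl
        have m2 : (4 * a e.1) * (4 * b e.2) = 16 * (a e.1 * b e.2) := by ring
        have m3 : 3*(4^k*4^k) ≤ (3*4^k+1) * 4^k := by
          have : 3*(4^k*4^k) = (3*4^k)*4^k := by ring
          rw [this]
          exact Nat.mul_le_mul_right _ (by omega)
        omega
    have hbig1 : 3*(4^k*4^k) * Ec ≤ 16 * bigP.card := by
      calc 3*(4^k*4^k) * Ec = ∑ _e ∈ edgesOf n Hs, 3*(4^k*4^k) := by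
            rw [Finset.sum_const, smul_eq_mul, mul_comm]
        _ ≤ ∑ e ∈ edgesOf n Hs, 16 * (a e.1 * b e.2) :=
            Finset.sum_le_sum (fun e he => (hedge e he).2)
        _ = 16 * ∑ e ∈ edgesOf n Hs, (lp e).card := by
            rw [Finset.mul_sum]
            exact Finset.sum_congr rfl (fun e _ => by rw [hlpcard])
        _ = 16 * ((edgesOf n Hs).biUnion lp).card := by
            rw [Finset.card_biUnion (fun e _ e' _ hne => hlpdisj e e' hne)]
        _ ≤ 16 * bigP.card := by
            apply Nat.mul_le_mul_left
            apply Finset.card_le_card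
            intro pq hpq
            rw [Finset.mem_biUnion] at hpq
            obtain ⟨e, he, hin⟩ := hpq
            exact (hedge e he).1 hin
    have c1 : m ≤ 2*4^k*Ec^2 :=
      le_trans hmin (Nat.mul_le_mul_left _ hiso)
    calc 64^k*m ≤ 64^k*(2*4^k*Ec^2) := Nat.mul_le_mul_left _ c1
      _ = 2*(((4^k*4^k)*(4^k*4^k))*Ec^2) := by rw [← h64]; ring
      _ ≤ 9*(((4^k*4^k)*(4^k*4^k))*Ec^2) := Nat.mul_le_mul_right _ (by norm_num)
      _ = (3*(4^k*4^k)*Ec)^2 := by ring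
      _ ≤ (16*bigP.card)^2 := Nat.pow_le_pow_left hbig1 2
      _ = 256*bigP.card^2 := by ring
  · -- most mass in low boxes
    push_neg at hcase
    set Ls := (gridN n).filter (fun g => ¬(3*4^k < 4 * a g)) with hLs
    have hsplit : ∑ g ∈ Hs, a g + ∑ g ∈ Ls, a g = m := by
      rw [← hasum, hHs, hLs]
      exact Finset.sum_filter_add_sum_filter_not _ _ _
    have hHsle : ∑ g ∈ Hs, a g ≤ 4^k * Hs.card := by
      calc ∑ g ∈ Hs, a g ≤ ∑ _g ∈ Hs, 4^k :=
            Finset.sum_le_sum (fun g hg => hale g (hHsub hg))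
        _ = 4^k * Hs.card := by rw [Finset.sum_const, smul_eq_mul, mul_comm]
    have hlow2 : m ≤ 2 * ∑ g ∈ Ls, a g := by
      have e1 : 2*(4^k*Hs.card) = 2*4^k*Hs.card := by ring
      omega
    have hdiag : ∀ g ∈ Ls, lp (g,g) ⊆ bigP ∧ 4^k * a g ≤ 4 * (a g * b g) := by
      intro g hg
      have hgg : g ∈ gridN n := by
        rw [hLs] at hg; exact (Finset.mem_filter.mp hg).1
      have hal : 4 * a g ≤ 3*4^k := by
        have := (Finset.mem_filter.mp (hLs ▸ hg)).2
        omega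
      have habe : a g + b g = 4^k := hab g hgg
      have hbl : 4^k ≤ 4 * b g := by omega
      constructor
      · exact hlpsub (g,g) (Nat.le_succ _) (Nat.le_succ _) (Nat.le_succ _) (Nat.le_succ _)
      · calc 4^k * a g = a g * 4^k := by ring
          _ ≤ a g * (4 * b g) := Nat.mul_le_mul_left _ hbl
          _ = 4 * (a g * b g) := by ring
    have hbig2 : 4^k * m ≤ 8 * bigP.card := by
      calc 4^k*m ≤ 4^k*(2 * ∑ g ∈ Ls, a g) := Nat.mul_le_mul_left _ hlow2
        _ = 2 * (4^k * ∑ g ∈ Ls, a g) := by ring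
        _ = 2 * ∑ g ∈ Ls, 4^k * a g := by rw [Finset.mul_sum]
        _ ≤ 2 * ∑ g ∈ Ls, 4 * (a g * b g) :=
            Nat.mul_le_mul_left _ (Finset.sum_le_sum (fun g hg => (hdiag g hg).2))
        _ = 8 * ∑ g ∈ Ls, (a g * b g) := by
            rw [Finset.mul_sum, Finset.mul_sum]
            exact Finset.sum_congr rfl (fun g _ => by ring)
        _ = 8 * ∑ g ∈ Ls, (lp (g,g)).card := by
            congr 1
            exact Finset.sum_congr rfl (fun g _ => (hlpcard (g,g)).symm)
        _ = 8 * (Ls.biUnion (fun g => lp (g,g))).card := by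
            rw [Finset.card_biUnion (fun g _ g' _ hne => hlpdisj (g,g) (g',g')
              (fun hcon => hne (congrArg Prod.fst hcon)))]
        _ ≤ 8 * bigP.card := by
            apply Nat.mul_le_mul_left
            apply Finset.card_le_card
            intro pq hpq
            rw [Finset.mem_biUnion] at hpq
            obtain ⟨g, hg, hin⟩ := hpq
            exact (hdiag g hg).1 hin
    have hc : 4^k ≤ m := le_trans (Nat.pow_le_pow_left (by norm_num) k) hk
    calc 64^k*m = 4^k*4^k*(4^k*m) := by rw [← h64]; ring
      _ ≤ 4^k*m*(4^k*m) := Nat.mul_le_mul_right _ (Nat.mul_le_mul_left _ hc)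
      _ = (4^k*m)^2 := (pow_two _).symm
      _ ≤ (8*bigP.card)^2 := Nat.pow_le_pow_left hbig2 2
      _ = 64*bigP.card^2 := by ring
      _ ≤ 256*bigP.card^2 := Nat.mul_le_mul_right _ (by norm_num)

lemma jint2_eq (p q : ℤ×ℤ) :
    Jint2 3 p q = (Real.sqrt ((((p.1 - q.1).natAbs^2 + (p.2 - q.2).natAbs^2 : ℕ) : ℝ)))^(-(3:ℝ)) := by
  unfold Jint2
  congr 2
  rw [show (((p.1 - q.1).natAbs^2 + (p.2 - q.2).natAbs^2 : ℕ) : ℝ)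
      = ((p.1-q.1).natAbs:ℝ)^2 + ((p.2-q.2).natAbs:ℝ)^2 by push_cast; ring,
    natAbs_sq_cast, natAbs_sq_cast]

lemma jint2_nonneg (p q : ℤ×ℤ) : 0 ≤ Jint2 3 p q := by
  unfold Jint2
  exact Real.rpow_nonneg (Real.sqrt_nonneg _) _

lemma jint2_symm (p q : ℤ×ℤ) : Jint2 3 p q = Jint2 3 q p := by
  unfold Jint2
  rw [show ((p.1-q.1:ℤ):ℝ)^2 = ((q.1-p.1:ℤ):ℝ)^2 by push_cast; ring,
     show ((p.2-q.2:ℤ):ℝ)^2 = ((q.2-p.2:ℤ):ℝ)^2 by push_cast; ring]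

/-- pointwise kernel lower bound by dyadic indicators -/
lemma kernel_pw (d : ℕ) (hd : 1 ≤ d) (T : ℕ) :
    (7/8 : ℝ) * ∑ j ∈ Finset.Icc 2 T, (if d ≤ 4^j then ((1/8:ℝ))^j else 0) ≤
      (Real.sqrt (d:ℝ))^(-(3:ℝ)) := by
  have hd0 : (0:ℝ) < d := by exact_mod_cast hd
  have hX : (Real.sqrt (d:ℝ)) > 0 := Real.sqrt_pos.mpr hd0
  have hker : (Real.sqrt (d:ℝ))^(-(3:ℝ)) = 1 / ((d:ℝ) * Real.sqrt (d:ℝ)) := by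
    rw [Real.rpow_neg (le_of_lt hX)]
    rw [show (3:ℝ) = ((3:ℕ):ℝ) by norm_num, Real.rpow_natCast]
    rw [one_div]
    congr 1
    rw [pow_succ, pow_two, Real.mul_self_sqrt (le_of_lt hd0)]
  rw [hker]
  -- bound the sum
  set F := (Finset.Icc 2 T).filter (fun j => d ≤ 4^j) with hF
  have hsum : ∑ j ∈ Finset.Icc 2 T, (if d ≤ 4^j then ((1/8:ℝ))^j else 0) = ∑ j ∈ F, ((1/8:ℝ))^j := by
    rw [hF, Finset.sum_filter]
  rw [hsum]
  rcases Finset.eq_empty_or_nonempty F with hFe | hFne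
  · rw [hFe]
    simp
    positivity
  · set j₀ := F.min' hFne with hj₀
    have hj₀F : j₀ ∈ F := Finset.min'_mem F hFne
    have hj₀d : d ≤ 4^j₀ := (Finset.mem_filter.mp hj₀F).2
    have hj₀T : j₀ ≤ T := (Finset.mem_Icc.mp (Finset.mem_filter.mp hj₀F).1).2
    have hsub : F ⊆ Finset.Icc j₀ T := by
      intro j hj
      rw [Finset.mem_Icc]
      exact ⟨Finset.min'_le F j hj, (Finset.mem_Icc.mp (Finset.mem_filter.mp hj).1).2⟩
    have h1 : ∑ j ∈ F, ((1/8:ℝ))^j ≤ ∑ j ∈ Finset.Icc j₀ T, ((1/8:ℝ))^j :=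
      Finset.sum_le_sum_of_subset_of_nonneg hsub (fun j _ _ => by positivity)
    have h2 : ∑ j ∈ Finset.Icc j₀ T, ((1/8:ℝ))^j ≤ ((1/8:ℝ))^j₀ * (8/7) := by
      rw [show Finset.Icc j₀ T = Finset.Ico j₀ (T+1) by rw [Finset.Ico_add_one_right_eq_Icc]]
      rw [Finset.sum_Ico_eq_sum_range]
      have : ∀ i, ((1/8:ℝ))^(j₀ + i) = ((1/8:ℝ))^j₀ * ((1/8:ℝ))^i := fun i => pow_add _ _ _
      rw [Finset.sum_congr rfl (fun i _ => this i), ← Finset.mul_sum]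
      apply mul_le_mul_of_nonneg_left _ (by positivity)
      have hgeom := geom_sum_eq (show (1/8:ℝ) ≠ 1 by norm_num) (T + 1 - j₀)
      rw [hgeom]
      have hp : (0:ℝ) ≤ (1/8:ℝ)^(T+1-j₀) := by positivity
      have hp2 : ((1/8:ℝ))^(T+1-j₀) ≤ 1 := pow_le_one₀ (by norm_num) (by norm_num)
      have : ((1/8:ℝ)^(T+1-j₀) - 1) / (1/8 - 1) = (1 - (1/8:ℝ)^(T+1-j₀)) / (7/8) := by
        ring
      rw [this]
      rw [div_le_iff₀ (by norm_num)]
      nlinarith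
    have h3 : ((1/8:ℝ))^j₀ ≤ 1 / ((d:ℝ) * Real.sqrt (d:ℝ)) := by
      have hds : Real.sqrt (d:ℝ) ≤ (2:ℝ)^j₀ := by
        rw [show ((2:ℝ))^j₀ = Real.sqrt (((2:ℝ)^j₀)^2) by rw [Real.sqrt_sq (by positivity)]]
        apply Real.sqrt_le_sqrt
        have : ((2:ℝ)^j₀)^2 = (4:ℝ)^j₀ := by
          rw [← pow_mul, mul_comm, pow_mul]; norm_num
        rw [this]
        exact_mod_cast hj₀d
      have hdd : (d:ℝ) * Real.sqrt (d:ℝ) ≤ (8:ℝ)^j₀ := by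
        have h4 : (d:ℝ) ≤ (4:ℝ)^j₀ := by exact_mod_cast hj₀d
        have h8 : ((8:ℝ))^j₀ = (4:ℝ)^j₀ * (2:ℝ)^j₀ := by
          rw [← mul_pow]; norm_num
        rw [h8]
        exact mul_le_mul h4 hds (Real.sqrt_nonneg _) (by positivity)
      rw [show ((1/8:ℝ))^j₀ = 1 / (8:ℝ)^j₀ by rw [div_pow]; norm_num]
      apply one_div_le_one_div_of_le
      · positivity
      · exact hdd
    calc (7/8:ℝ) * ∑ j ∈ F, ((1/8:ℝ))^j ≤ (7/8) * (((1/8:ℝ))^j₀ * (8/7)) := by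
          apply mul_le_mul_of_nonneg_left (le_trans h1 h2) (by norm_num)
      _ = ((1/8:ℝ))^j₀ := by ring
      _ ≤ 1 / ((d:ℝ) * Real.sqrt (d:ℝ)) := h3

lemma core (e : ℕ) (x : ℤ×ℤ) (A B : Finset (ℤ×ℤ))
    (hunion : A ∪ B = cube2 (2^e) x) (hdisj : Disjoint A B)
    (hcard : A.card ≤ B.card) :
    (1/10000 : ℝ) * Real.sqrt ((A.card:ℝ) + 1) * Real.log ((A.card:ℝ) + 1) ≤
      ∑ p ∈ A, ∑ q ∈ B, Jint2 3 p q := by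
  classical
  set m := A.card with hm
  have hJ0 : 0 ≤ ∑ p ∈ A, ∑ q ∈ B, Jint2 3 p q :=
    Finset.sum_nonneg (fun p _ => Finset.sum_nonneg (fun q _ => jint2_nonneg p q))
  rcases Nat.eq_zero_or_pos m with hm0 | hm1
  · rw [hm0]
    norm_num
    exact hJ0
  -- m ≥ 1
  have hmcard : A.card + B.card = (2^e)^2 := by
    rw [← Finset.card_union_of_disjoint hdisj, hunion, card_cube2]
  have hAB2 : 2 * m ≤ (2^e)^2 := by omega
  set K := Nat.log 64 m with hK
  have hK1 : 64^K ≤ m := Nat.pow_log_le_self 64 (by omega)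
  have hK2 : m < 64^(K+1) := Nat.lt_pow_succ_log_self (by norm_num) m
  -- counting sets
  set Pc : ℕ → ℕ := fun j => (((A ×ˢ B).filter
      (fun pq => ((pq.1.1 - pq.2.1).natAbs)^2 + ((pq.1.2 - pq.2.2).natAbs)^2 ≤ 4^j)).card) with hPc
  -- claim for scales k ≤ K
  have hclaim : ∀ k, k ≤ K → 64^k * m ≤ 256 * (Pc (k+2))^2 := by
    intro k hk
    have h64 : (64:ℕ)^k ≤ m := le_trans (Nat.pow_le_pow_right (by norm_num) hk) hK1
    -- k ≤ e
    have hke : k ≤ e := by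
      have e1 : (2:ℕ)^(6*k+1) = 64^k * 2 := by
        rw [pow_succ, pow_mul]; norm_num
      have e2 : (2:ℕ)^(2*e) = (2^e)^2 := by
        rw [mul_comm 2 e, pow_mul]
      have h2 : (2:ℕ)^(6*k+1) ≤ 2^(2*e) := by omega
      have h3 : 6*k+1 ≤ 2*e := (Nat.pow_le_pow_iff_right (by norm_num)).mp h2
      omega
    have hn : 2^(e-k) * 2^k = 2^e := by
      rw [← pow_add]
      congr 1
      omega
    exact scale_claim (2^e) k x A B (2^(e-k)) hn hunion hdisj hAB2 h64
  -- real bound on Pc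
  have hPreal : ∀ k, k ≤ K → (8:ℝ)^k * Real.sqrt (m:ℝ) / 16 ≤ (Pc (k+2) : ℝ) := by
    intro k hk
    have h := hclaim k hk
    have hcast : (64:ℝ)^k * (m:ℝ) ≤ 256 * ((Pc (k+2)):ℝ)^2 := by exact_mod_cast h
    have hsq : ((8:ℝ)^k * Real.sqrt (m:ℝ))^2 = (64:ℝ)^k * m := by
      rw [mul_pow, Real.sq_sqrt (by positivity)]
      congr 1
      rw [← pow_mul, mul_comm, pow_mul]
      norm_num
    have hLHSnn : (0:ℝ) ≤ (8:ℝ)^k * Real.sqrt (m:ℝ) := by positivity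
    have h16 : ((8:ℝ)^k * Real.sqrt (m:ℝ))^2 ≤ (16 * (Pc (k+2) : ℝ))^2 := by
      rw [hsq]
      calc (64:ℝ)^k * m ≤ 256 * ((Pc (k+2)):ℝ)^2 := hcast
        _ = (16 * (Pc (k+2) : ℝ))^2 := by ring
    have hroot := Real.sqrt_le_sqrt (le_of_lt (lt_of_le_of_lt h16 (lt_add_one _)))
    have hroot2 : (8:ℝ)^k * Real.sqrt (m:ℝ) ≤ 16 * (Pc (k+2) : ℝ) := by
      have r1 : Real.sqrt (((8:ℝ)^k * Real.sqrt (m:ℝ))^2) = (8:ℝ)^k * Real.sqrt (m:ℝ) :=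
        Real.sqrt_sq hLHSnn
      have r2 : Real.sqrt ((16 * (Pc (k+2) : ℝ))^2) = 16 * (Pc (k+2) : ℝ) :=
        Real.sqrt_sq (by positivity)
      have := Real.sqrt_le_sqrt h16
      rw [r1, r2] at this
      exact this
    linarith
  -- assemble
  set T := K + 2 with hT
  have hsum_prod : ∑ p ∈ A, ∑ q ∈ B, Jint2 3 p q = ∑ pq ∈ A ×ˢ B, Jint2 3 pq.1 pq.2 := by
    rw [Finset.sum_product]
  have hpair_ne : ∀ pq ∈ A ×ˢ B,
      1 ≤ ((pq.1.1 - pq.2.1).natAbs)^2 + ((pq.1.2 - pq.2.2).natAbs)^2 := by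
    intro pq hpq
    rw [Finset.mem_product] at hpq
    by_contra hcon
    push_neg at hcon
    have hsq1 : ((pq.1.1 - pq.2.1).natAbs)^2 = 0 := by omega
    have hsq2 : ((pq.1.2 - pq.2.2).natAbs)^2 = 0 := by omega
    have h1 : (pq.1.1 - pq.2.1).natAbs = 0 := by
      exact (pow_eq_zero_iff two_ne_zero).mp hsq1
    have h2 : (pq.1.2 - pq.2.2).natAbs = 0 := by
      exact (pow_eq_zero_iff two_ne_zero).mp hsq2
    have e1 : pq.1.1 = pq.2.1 := by
      have := Int.natAbs_eq_zero.mp h1; omega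
    have e2 : pq.1.2 = pq.2.2 := by
      have := Int.natAbs_eq_zero.mp h2; omega
    have : pq.1 = pq.2 := Prod.ext e1 e2
    have : pq.2 ∈ A := this ▸ hpq.1
    exact (Finset.disjoint_left.mp hdisj this) hpq.2
  have hJ1 : (7/8:ℝ) * ∑ j ∈ Finset.Icc 2 T, ((1/8:ℝ))^j * (Pc j : ℝ) ≤
      ∑ p ∈ A, ∑ q ∈ B, Jint2 3 p q := by
    rw [hsum_prod]
    have hstep : ∀ pq ∈ A ×ˢ B,
        (7/8:ℝ) * ∑ j ∈ Finset.Icc 2 T, (if ((pq.1.1 - pq.2.1).natAbs)^2 + ((pq.1.2 - pq.2.2).natAbs)^2 ≤ 4^j then ((1/8:ℝ))^j else 0)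
          ≤ Jint2 3 pq.1 pq.2 := by
      intro pq hpq
      rw [jint2_eq]
      exact kernel_pw _ (hpair_ne pq hpq) T
    calc (7/8:ℝ) * ∑ j ∈ Finset.Icc 2 T, ((1/8:ℝ))^j * (Pc j : ℝ)
        = (7/8:ℝ) * ∑ j ∈ Finset.Icc 2 T, ∑ pq ∈ A ×ˢ B,
            (if ((pq.1.1 - pq.2.1).natAbs)^2 + ((pq.1.2 - pq.2.2).natAbs)^2 ≤ 4^j then ((1/8:ℝ))^j else 0) := by
          congr 1
          apply Finset.sum_congr rfl
          intro j _
          rw [← Finset.sum_filter]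
          rw [Finset.sum_const, nsmul_eq_mul]
          rw [hPc]
          ring
      _ = ∑ pq ∈ A ×ˢ B, (7/8:ℝ) * ∑ j ∈ Finset.Icc 2 T,
            (if ((pq.1.1 - pq.2.1).natAbs)^2 + ((pq.1.2 - pq.2.2).natAbs)^2 ≤ 4^j then ((1/8:ℝ))^j else 0) := by
          rw [Finset.sum_comm]
          rw [Finset.mul_sum]
      _ ≤ ∑ pq ∈ A ×ˢ B, Jint2 3 pq.1 pq.2 := Finset.sum_le_sum hstep
  have hJ2 : ((K:ℝ)+1) * (Real.sqrt (m:ℝ) / 1024) ≤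
      ∑ j ∈ Finset.Icc 2 T, ((1/8:ℝ))^j * (Pc j : ℝ) := by
    have hIcc : Finset.Icc 2 T = Finset.Ico 2 (T+1) := by rw [Finset.Ico_add_one_right_eq_Icc]
    rw [hIcc, Finset.sum_Ico_eq_sum_range]
    have hTT : T + 1 - 2 = K + 1 := by omega
    rw [hTT]
    have hterm : ∀ k ∈ Finset.range (K+1),
        Real.sqrt (m:ℝ) / 1024 ≤ ((1/8:ℝ))^(2+k) * (Pc (2+k) : ℝ) := by
      intro k hk
      rw [Finset.mem_range] at hk
      have hp := hPreal k (by omega)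
      have hkk : k + 2 = 2 + k := by omega
      rw [hkk] at hp
      have hw : ((1/8:ℝ))^(2+k) = (1/64) * (1/8:ℝ)^k := by
        rw [pow_add]; norm_num
      have h8 : ((1/8:ℝ))^k * (8:ℝ)^k = 1 := by
        rw [← mul_pow]; norm_num
      calc Real.sqrt (m:ℝ) / 1024 = (1/64) * ((1/8:ℝ)^k * ((8:ℝ)^k * Real.sqrt (m:ℝ) / 16)) := by
            rw [show (1/8:ℝ)^k * ((8:ℝ)^k * Real.sqrt (m:ℝ) / 16) = ((1/8:ℝ)^k * (8:ℝ)^k) * Real.sqrt (m:ℝ) / 16 by ring, h8]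
            ring
        _ ≤ (1/64) * ((1/8:ℝ)^k * (Pc (2+k) : ℝ)) := by
            apply mul_le_mul_of_nonneg_left _ (by norm_num)
            apply mul_le_mul_of_nonneg_left hp (by positivity)
        _ = ((1/8:ℝ))^(2+k) * (Pc (2+k) : ℝ) := by rw [hw]; ring
    calc ((K:ℝ)+1) * (Real.sqrt (m:ℝ) / 1024)
        = ∑ _k ∈ Finset.range (K+1), Real.sqrt (m:ℝ) / 1024 := by
          rw [Finset.sum_const, Finset.card_range, nsmul_eq_mul]
          push_cast
          ring
      _ ≤ ∑ k ∈ Finset.range (K+1), ((1/8:ℝ))^(2+k) * (Pc (2+k) : ℝ) :=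
          Finset.sum_le_sum hterm
  have hJfin : (7/8192:ℝ) * (((K:ℝ)+1) * Real.sqrt (m:ℝ)) ≤ ∑ p ∈ A, ∑ q ∈ B, Jint2 3 p q := by
    calc (7/8192:ℝ) * (((K:ℝ)+1) * Real.sqrt (m:ℝ))
        = (7/8:ℝ) * (((K:ℝ)+1) * (Real.sqrt (m:ℝ) / 1024)) := by ring
      _ ≤ (7/8:ℝ) * ∑ j ∈ Finset.Icc 2 T, ((1/8:ℝ))^j * (Pc j : ℝ) :=
          mul_le_mul_of_nonneg_left hJ2 (by norm_num)
      _ ≤ _ := hJ1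
  -- final numerology
  have hm1R : (1:ℝ) ≤ (m:ℝ) := by exact_mod_cast hm1
  have hlog : Real.log ((m:ℝ)+1) ≤ ((K:ℝ)+1) * Real.log 64 := by
    have hle : ((m:ℝ)+1) ≤ (64:ℝ)^(K+1) := by
      have : (m:ℕ)+1 ≤ 64^(K+1) := hK2
      exact_mod_cast this
    calc Real.log ((m:ℝ)+1) ≤ Real.log ((64:ℝ)^(K+1)) :=
          Real.log_le_log (by positivity) hle
      _ = ((K:ℝ)+1) * Real.log 64 := by
          rw [Real.log_pow]
          push_cast
          ring
  have hlog64 : Real.log 64 ≤ 4.2 := by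
    have h26 : (64:ℝ) = 2^6 := by norm_num
    rw [h26, Real.log_pow]
    have := Real.log_two_lt_d9
    push_cast
    nlinarith
  have hsqrt2 : Real.sqrt 2 ≤ 1.5 := by
    nlinarith [Real.sq_sqrt (show (0:ℝ) ≤ 2 by norm_num), Real.sqrt_nonneg 2]
  have hsqm : Real.sqrt ((m:ℝ)+1) ≤ 1.5 * Real.sqrt (m:ℝ) := by
    have h1 : Real.sqrt ((m:ℝ)+1) ≤ Real.sqrt (2*(m:ℝ)) := by
      apply Real.sqrt_le_sqrt
      linarith
    have h2 : Real.sqrt (2*(m:ℝ)) = Real.sqrt 2 * Real.sqrt (m:ℝ) :=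
      Real.sqrt_mul (by norm_num) _
    calc Real.sqrt ((m:ℝ)+1) ≤ Real.sqrt 2 * Real.sqrt (m:ℝ) := by rw [← h2]; exact h1
      _ ≤ 1.5 * Real.sqrt (m:ℝ) :=
          mul_le_mul_of_nonneg_right hsqrt2 (Real.sqrt_nonneg _)
  have hlogK : Real.log ((m:ℝ)+1) ≤ ((K:ℝ)+1) * 4.2 := by
    calc Real.log ((m:ℝ)+1) ≤ ((K:ℝ)+1) * Real.log 64 := hlog
      _ ≤ ((K:ℝ)+1) * 4.2 := by
          apply mul_le_mul_of_nonneg_left hlog64 (by positivity)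
  have hlognn : 0 ≤ Real.log ((m:ℝ)+1) := Real.log_nonneg (by linarith)
  calc (1/10000:ℝ) * Real.sqrt ((m:ℝ)+1) * Real.log ((m:ℝ)+1)
      ≤ (1/10000:ℝ) * (1.5 * Real.sqrt (m:ℝ)) * (((K:ℝ)+1) * 4.2) := by
        apply mul_le_mul
        · exact mul_le_mul_of_nonneg_left hsqm (by norm_num)
        · exact hlogK
        · exact hlognn
        · positivity
    _ = (6.3/10000:ℝ) * (((K:ℝ)+1) * Real.sqrt (m:ℝ)) := by ring
    _ ≤ (7/8192:ℝ) * (((K:ℝ)+1) * Real.sqrt (m:ℝ)) := by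
        apply mul_le_mul_of_nonneg_right (by norm_num)
        positivity
    _ ≤ ∑ p ∈ A, ∑ q ∈ B, Jint2 3 p q := hJfin

theorem stmt9 (r : ℕ) (hr : 4 < r) :
    ∃ b₈ : ℝ, 0 < b₈ ∧ ∀ (L : ℕ), 1 ≤ L → ∀ (x : ℤ × ℤ) (σ : ℤ × ℤ → ℤ),
      (∀ z, σ z = 1 ∨ σ z = -1) → ∀ m : ℕ,
      m = min (((cube2 (2 ^ (r * L)) x).filter (fun z => σ z = 1)).card)
              (((cube2 (2 ^ (r * L)) x).filter (fun z => σ z = -1)).card) →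
      b₈ * Real.sqrt ((m : ℝ) + 1) * Real.log ((m : ℝ) + 1) ≤
        ∑ p ∈ (cube2 (2 ^ (r * L)) x).filter (fun z => σ z = 1),
          ∑ q ∈ (cube2 (2 ^ (r * L)) x).filter (fun z => σ z = -1),
            Jint2 3 p q := by
  classical
  refine ⟨1/10000, by norm_num, ?_⟩
  intro L hL x σ hσ m hmin
  set C := cube2 (2 ^ (r * L)) x with hC
  set P := C.filter (fun z => σ z = 1) with hP
  set M := C.filter (fun z => σ z = -1) with hM
  have hdisj : Disjoint P M := by
    rw [Finset.disjoint_left]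
    intro z hz1 hz2
    have e1 : σ z = 1 := (Finset.mem_filter.mp hz1).2
    have e2 : σ z = -1 := (Finset.mem_filter.mp hz2).2
    omega
  have hunion : P ∪ M = C := by
    ext z
    simp only [hP, hM, Finset.mem_union, Finset.mem_filter]
    rcases hσ z with h | h <;> simp [h] <;> tauto
  rcases le_or_gt P.card M.card with hle | hlt
  · have hm' : m = P.card := by rw [hmin]; exact min_eq_left hle
    rw [hm']
    exact core (r*L) x P M hunion hdisj hle
  · have hm' : m = M.card := by rw [hmin]; exact min_eq_right (le_of_lt hlt)
    rw [hm']
    have hunion' : M ∪ P = C := by rw [Finset.union_comm]; exact hunion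
    have := core (r*L) x M P hunion' hdisj.symm (le_of_lt hlt)
    calc (1/10000 : ℝ) * Real.sqrt ((M.card:ℝ) + 1) * Real.log ((M.card:ℝ) + 1)
        ≤ ∑ p ∈ M, ∑ q ∈ P, Jint2 3 p q := this
      _ = ∑ p ∈ P, ∑ q ∈ M, Jint2 3 p q := by
          rw [Finset.sum_comm]
          exact Finset.sum_congr rfl (fun p _ => Finset.sum_congr rfl
            (fun q _ => jint2_symm q p))
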